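/- For the bilinear game dynamics Ẍ = -μẊ - AY - qAẎ, Ÿ = -μẎ + AᵀX + qAᵀẊ with the choice q = 2/μ + μ, the time derivative of E_t = ½‖Ẋ + μX + μAY‖² + ½‖Ẏ + μY - μAᵀX‖² + ½(‖Ẋ‖² + ‖Ẏ‖²) + ‖AᵀX‖² + ‖AY‖² satisfies Ė_t = -μ(‖AᵀX‖² + ‖AY‖²) - μ(‖Ẋ‖² + ‖Ẏ‖²) ≤ 0. -/

import Mathlib

open Matrix

lemma lead_key_transpose {n : ℕ} (B : Matrix (Fin n) (Fin n) ℝ) (f g : Fin n → ℝ) :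
    ∑ i, f i * B.mulVec g i = ∑ i, g i * Bᵀ.mulVec f i := by
  simp only [Matrix.mulVec, dotProduct, Matrix.transpose_apply, Finset.mul_sum]
  rw [Finset.sum_comm]
  exact Finset.sum_congr rfl fun i _ => Finset.sum_congr rfl fun j _ => by ring

lemma lead_alg_lemma {n : ℕ} (A : Matrix (Fin n) (Fin n) ℝ) (μ q : ℝ) (hμ : μ ≠ 0)
    (hq : q = 2/μ + μ) (x y u v : Fin n → ℝ) :
    (1/2) * ∑ i, 2 * (u i + μ * x i + μ * A.mulVec y i) *
        ((-(μ * u i) - A.mulVec y i - q * A.mulVec v i) + μ * u i + μ * A.mulVec v i)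
      + (1/2) * ∑ i, 2 * (v i + μ * y i - μ * Aᵀ.mulVec x i) *
        ((-(μ * v i) + Aᵀ.mulVec x i + q * Aᵀ.mulVec u i) + μ * v i - μ * Aᵀ.mulVec u i)
      + (1/2) * (∑ i, 2 * u i * (-(μ * u i) - A.mulVec y i - q * A.mulVec v i)
          + ∑ i, 2 * v i * (-(μ * v i) + Aᵀ.mulVec x i + q * Aᵀ.mulVec u i))
      + ∑ i, 2 * Aᵀ.mulVec x i * Aᵀ.mulVec u i
      + ∑ i, 2 * A.mulVec y i * A.mulVec v i
    = -μ * (∑ i, (Aᵀ.mulVec x i)^2 + ∑ i, (A.mulVec y i)^2)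
      - μ * (∑ i, (u i)^2 + ∑ i, (v i)^2) := by
  have hq' : μ * q = 2 + μ * μ := by rw [hq]; field_simp
  have k1 := lead_key_transpose A u y
  have k2 := lead_key_transpose Aᵀ v x
  rw [Matrix.transpose_transpose] at k2
  have k3 := lead_key_transpose A u v
  have k4 := lead_key_transpose A x y
  rw [← sub_eq_zero]
  simp only [Finset.mul_sum, mul_add]
  simp only [← Finset.sum_add_distrib]
  rw [← Finset.sum_sub_distrib]
  trans (∑ i, ((-2) * (u i * A.mulVec y i) + 2 * (v i * Aᵀ.mulVec x i)
      + (μ - 2*q) * (u i * A.mulVec v i) + (2*q - μ) * (v i * Aᵀ.mulVec u i)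
      + (-μ) * (x i * A.mulVec y i) + μ * (y i * Aᵀ.mulVec x i)
      + (μ*(μ-q)) * (x i * A.mulVec v i) + (μ*(q-μ)) * (y i * Aᵀ.mulVec u i)
      + (μ*(μ-q)+2) * (A.mulVec y i * A.mulVec v i)
      + (2-μ*(q-μ)) * (Aᵀ.mulVec x i * Aᵀ.mulVec u i)))
  · rw [← Finset.sum_sub_distrib]
    exact Finset.sum_congr rfl fun i _ => by ring
  simp only [Finset.sum_add_distrib, ← Finset.mul_sum]
  linear_combination (-2)*k1 + 2*k2 + (μ-2*q)*k3 + (-μ)*k4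
    + (∑ i, y i * Aᵀ.mulVec u i - ∑ i, x i * A.mulVec v i
       - ∑ i, A.mulVec y i * A.mulVec v i - ∑ i, Aᵀ.mulVec x i * Aᵀ.mulVec u i) * hq'

/-- For the bilinear game dynamics with q = 2/μ + μ, the time derivative of the
Lyapunov function E_t equals -μ(‖AᵀX‖² + ‖AY‖²) - μ(‖Ẋ‖² + ‖Ẏ‖²) ≤ 0. -/
theorem lead_bilinear_lyapunov_deriv
    (n : ℕ) (A : Matrix (Fin n) (Fin n) ℝ) (μ q : ℝ) (hμ : 0 < μ)
    (hq : q = 2/μ + μ)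
    (X Y : ℝ → (Fin n → ℝ)) (hX : ContDiff ℝ 2 X) (hY : ContDiff ℝ 2 Y)
    (hdynX : ∀ t : ℝ, deriv (deriv X) t =
      -(μ • deriv X t) - A.mulVec (Y t) - q • A.mulVec (deriv Y t))
    (hdynY : ∀ t : ℝ, deriv (deriv Y) t =
      -(μ • deriv Y t) + Aᵀ.mulVec (X t) + q • Aᵀ.mulVec (deriv X t))
    (E : ℝ → ℝ)
    (hE : ∀ t : ℝ, E t =
      (1/2) * ∑ i, (deriv X t i + μ * X t i + μ * A.mulVec (Y t) i) ^ 2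
        + (1/2) * ∑ i, (deriv Y t i + μ * Y t i - μ * Aᵀ.mulVec (X t) i) ^ 2
        + (1/2) * (∑ i, (deriv X t i) ^ 2 + ∑ i, (deriv Y t i) ^ 2)
        + ∑ i, (Aᵀ.mulVec (X t) i) ^ 2 + ∑ i, (A.mulVec (Y t) i) ^ 2) :
    ∀ t : ℝ,
      deriv E t = -μ * (∑ i, (Aᵀ.mulVec (X t) i) ^ 2 + ∑ i, (A.mulVec (Y t) i) ^ 2)
                  - μ * (∑ i, (deriv X t i) ^ 2 + ∑ i, (deriv Y t i) ^ 2)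
      ∧ deriv E t ≤ 0 := by
  intro t
  have hXc : ContDiff ℝ ((1:ℕ∞)+1) X := by exact_mod_cast hX
  have hYc : ContDiff ℝ ((1:ℕ∞)+1) Y := by exact_mod_cast hY
  have hXd1 : HasDerivAt X (deriv X t) t :=
    ((hX.differentiable (by norm_num)) t).hasDerivAt
  have hYd1 : HasDerivAt Y (deriv Y t) t :=
    ((hY.differentiable (by norm_num)) t).hasDerivAt
  have hXd2 : HasDerivAt (deriv X) (deriv (deriv X) t) t :=
    ((((contDiff_succ_iff_deriv.mp hXc).2.2).differentiable (by norm_num)) t).hasDerivAt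
  have hYd2 : HasDerivAt (deriv Y) (deriv (deriv Y) t) t :=
    ((((contDiff_succ_iff_deriv.mp hYc).2.2).differentiable (by norm_num)) t).hasDerivAt
  have cx : ∀ i, HasDerivAt (fun s => X s i) (deriv X t i) t := fun i =>
    (ContinuousLinearMap.proj (R := ℝ) (φ := fun _ : Fin n => ℝ)
      i).hasFDerivAt.comp_hasDerivAt t hXd1
  have cy : ∀ i, HasDerivAt (fun s => Y s i) (deriv Y t i) t := fun i =>
    (ContinuousLinearMap.proj (R := ℝ) (φ := fun _ : Fin n => ℝ)
      i).hasFDerivAt.comp_hasDerivAt t hYd1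
  have cdx : ∀ i, HasDerivAt (fun s => deriv X s i) (deriv (deriv X) t i) t := fun i =>
    (ContinuousLinearMap.proj (R := ℝ) (φ := fun _ : Fin n => ℝ)
      i).hasFDerivAt.comp_hasDerivAt t hXd2
  have cdy : ∀ i, HasDerivAt (fun s => deriv Y s i) (deriv (deriv Y) t i) t := fun i =>
    (ContinuousLinearMap.proj (R := ℝ) (φ := fun _ : Fin n => ℝ)
      i).hasFDerivAt.comp_hasDerivAt t hYd2
  have cb : ∀ i, HasDerivAt (fun s => A.mulVec (Y s) i) (A.mulVec (deriv Y t) i) t := fun i =>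
    (((ContinuousLinearMap.proj i).comp
      (Matrix.mulVecLin A).toContinuousLinearMap).hasFDerivAt.comp_hasDerivAt t hYd1)
  have ca : ∀ i, HasDerivAt (fun s => Aᵀ.mulVec (X s) i) (Aᵀ.mulVec (deriv X t) i) t := fun i =>
    (((ContinuousLinearMap.proj i).comp
      (Matrix.mulVecLin Aᵀ).toContinuousLinearMap).hasFDerivAt.comp_hasDerivAt t hXd1)
  have h1 : HasDerivAt (fun s => ∑ i, (deriv X s i + μ * X s i + μ * A.mulVec (Y s) i) ^ 2)
      (∑ i, 2 * (deriv X t i + μ * X t i + μ * A.mulVec (Y t) i) *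
          (deriv (deriv X) t i + μ * deriv X t i + μ * A.mulVec (deriv Y t) i)) t := by
    refine HasDerivAt.fun_sum fun i _ => ?_
    simpa using (((cdx i).fun_add ((cx i).const_mul μ)).fun_add ((cb i).const_mul μ)).fun_pow 2
  have h2 : HasDerivAt (fun s => ∑ i, (deriv Y s i + μ * Y s i - μ * Aᵀ.mulVec (X s) i) ^ 2)
      (∑ i, 2 * (deriv Y t i + μ * Y t i - μ * Aᵀ.mulVec (X t) i) *
          (deriv (deriv Y) t i + μ * deriv Y t i - μ * Aᵀ.mulVec (deriv X t) i)) t := by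
    refine HasDerivAt.fun_sum fun i _ => ?_
    simpa using (((cdy i).fun_add ((cy i).const_mul μ)).fun_sub ((ca i).const_mul μ)).fun_pow 2
  have h3 : HasDerivAt (fun s => ∑ i, (deriv X s i) ^ 2)
      (∑ i, 2 * deriv X t i * deriv (deriv X) t i) t := by
    refine HasDerivAt.fun_sum fun i _ => ?_
    simpa using (cdx i).fun_pow 2
  have h4 : HasDerivAt (fun s => ∑ i, (deriv Y s i) ^ 2)
      (∑ i, 2 * deriv Y t i * deriv (deriv Y) t i) t := by
    refine HasDerivAt.fun_sum fun i _ => ?_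
    simpa using (cdy i).fun_pow 2
  have h5 : HasDerivAt (fun s => ∑ i, (Aᵀ.mulVec (X s) i) ^ 2)
      (∑ i, 2 * Aᵀ.mulVec (X t) i * Aᵀ.mulVec (deriv X t) i) t := by
    refine HasDerivAt.fun_sum fun i _ => ?_
    simpa using (ca i).fun_pow 2
  have h6 : HasDerivAt (fun s => ∑ i, (A.mulVec (Y s) i) ^ 2)
      (∑ i, 2 * A.mulVec (Y t) i * A.mulVec (deriv Y t) i) t := by
    refine HasDerivAt.fun_sum fun i _ => ?_
    simpa using (cb i).fun_pow 2
  have hEt := ((((h1.const_mul (1/2)).fun_add (h2.const_mul (1/2))).fun_add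
      ((h3.fun_add h4).const_mul (1/2))).fun_add h5).fun_add h6
  rw [← funext hE] at hEt
  have hD := hEt.deriv
  have hmain : deriv E t =
      -μ * (∑ i, (Aᵀ.mulVec (X t) i) ^ 2 + ∑ i, (A.mulVec (Y t) i) ^ 2)
      - μ * (∑ i, (deriv X t i) ^ 2 + ∑ i, (deriv Y t i) ^ 2) := by
    rw [hD]
    simp only [hdynX, hdynY, Pi.add_apply, Pi.sub_apply, Pi.neg_apply, Pi.smul_apply,
      smul_eq_mul]
    exact lead_alg_lemma A μ q hμ.ne' hq (X t) (Y t) (deriv X t) (deriv Y t)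
  refine ⟨hmain, ?_⟩
  rw [hmain]
  have p1 : (0:ℝ) ≤ ∑ i, (Aᵀ.mulVec (X t) i) ^ 2 + ∑ i, (A.mulVec (Y t) i) ^ 2 := by positivity
  have p2 : (0:ℝ) ≤ ∑ i, (deriv X t i) ^ 2 + ∑ i, (deriv Y t i) ^ 2 := by positivity
  nlinarith [hμ.le]
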